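/- Let f^j_s : Z_2 → Z_2 (0 ≤ s, j ≤ m−1) be compatible ergodic functions and g^j_s : Z_2 → Z_2 (0 ≤ s < j ≤ m−1) be compatible measure-preserving functions. Then the m-variate mapping H^B with coordinates h^t(x^0,...,x^{m-1}) = x^t ⊕ ((⋀_{s=0}^{t-1} g^t_s(x^s)) ∧ (⋀_{r=0}^{m-1} (f^t_r(x^r) ⊕ x^r))), t = 0,...,m−1, is compatible and ergodic: for every n ≥ 1 it induces on (Z/2^n Z)^m a permutation with a single cycle of length 2^{mn}. -/

import Mathlib

open scoped BigOperators

/-- The `j`-th binary digit of a 2-adic integer, as an element of `ZMod 2`. -/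
noncomputable def bit2 (j : ℕ) (x : ℤ_[2]) : ZMod 2 := ((x.appr (j+1) / 2^j : ℕ) : ZMod 2)

/-- Compatibility = 1-Lipschitz w.r.t. the 2-adic metric. -/
def Compatible (f : ℤ_[2] → ℤ_[2]) : Prop := ∀ x y : ℤ_[2], ‖f x - f y‖ ≤ ‖x - y‖

/-- Reduction of a 2-adic integer modulo `2^n`. -/
noncomputable def padMod (n : ℕ) (x : ℤ_[2]) : ZMod (2^n) := (x.appr n : ZMod (2^n))

/-- The map induced by `f : ℤ₂ → ℤ₂` on `ZMod (2^n)` (via canonical lifts). -/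
noncomputable def inducedMap (n : ℕ) (f : ℤ_[2] → ℤ_[2]) : ZMod (2^n) → ZMod (2^n) :=
  fun a => padMod n (f ((a.val : ℕ) : ℤ_[2]))

/-- A self-map of a set is a single cycle (transitive on points). -/
def IsSingleCycle {α : Type*} (g : α → α) : Prop := ∀ a b : α, ∃ k : ℕ, g^[k] a = b

/-- Measure preservation: `f` induces a bijection modulo `2^n` for every `n`. -/
def MeasurePreservingZ (f : ℤ_[2] → ℤ_[2]) : Prop := ∀ n : ℕ, Function.Bijective (inducedMap n f)

/-- Ergodicity: `f` induces a single-cycle permutation modulo `2^n` for every `n`. -/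
def ErgodicZ (f : ℤ_[2] → ℤ_[2]) : Prop := ∀ n : ℕ, IsSingleCycle (inducedMap n f)

/-- Induced map modulo `2^n` of an `m`-variate map on `(ℤ₂)^m`. -/
noncomputable def inducedMapM (m n : ℕ) (G : (Fin m → ℤ_[2]) → Fin m → ℤ_[2]) :
    (Fin m → ZMod (2^n)) → Fin m → ZMod (2^n) :=
  fun a j => padMod n (G (fun i => (((a i).val : ℕ) : ℤ_[2])) j)

/-- Coordinatewise compatibility of an `m`-variate map. -/
def CompatibleM (m : ℕ) (G : (Fin m → ℤ_[2]) → Fin m → ℤ_[2]) : Prop :=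
  ∀ (n : ℕ) (x y : Fin m → ℤ_[2]), (∀ i, padMod n (x i) = padMod n (y i)) →
    ∀ j, padMod n (G x j) = padMod n (G y j)

/-- Ergodicity of an `m`-variate map: single cycle modulo `2^n` for all `n`. -/
def ErgodicM (m : ℕ) (G : (Fin m → ℤ_[2]) → Fin m → ℤ_[2]) : Prop :=
  ∀ n : ℕ, IsSingleCycle (inducedMapM m n G)

/-- The 2-adic integer with prescribed binary digits. -/
noncomputable def ofBits (b : ℕ → ZMod 2) : ℤ_[2] := ∑' i : ℕ, ((b i).val : ℤ_[2]) * 2^i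

/-- Bitwise XOR of 2-adic integers. -/
noncomputable def xor2 (x y : ℤ_[2]) : ℤ_[2] := ofBits (fun i => bit2 i x + bit2 i y)

/-- Bitwise AND of 2-adic integers. -/
noncomputable def and2 (x y : ℤ_[2]) : ℤ_[2] := ofBits (fun i => bit2 i x * bit2 i y)

/-- Bitwise AND of a list, the empty AND being `-1` (the all-ones string). -/
noncomputable def andL (l : List ℤ_[2]) : ℤ_[2] := l.foldr and2 (-1)

/-! ### Auxiliary machinery -/

section Aux

lemma padMod_eq_toZModPow (n : ℕ) (x : ℤ_[2]) : padMod n x = PadicInt.toZModPow n x := rfl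

instance (n : ℕ) : NeZero (2^n) := ⟨pow_ne_zero n two_ne_zero⟩

lemma padMod_eq_iff_norm (n : ℕ) (x y : ℤ_[2]) :
    padMod n x = padMod n y ↔ ‖x - y‖ ≤ (2:ℝ)^(-(n:ℤ)) := by
  rw [padMod_eq_toZModPow, padMod_eq_toZModPow, ← sub_eq_zero, ← map_sub, ← RingHom.mem_ker,
    PadicInt.ker_toZModPow]
  exact (PadicInt.norm_le_pow_iff_mem_span_pow _ n).symm

lemma padMod_eq_iff_span (n : ℕ) (x y : ℤ_[2]) :
    padMod n x = padMod n y ↔ x - y ∈ Ideal.span {((2:ℤ_[2]))^n} := by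
  rw [padMod_eq_toZModPow, padMod_eq_toZModPow, ← sub_eq_zero, ← map_sub, ← RingHom.mem_ker,
    PadicInt.ker_toZModPow]
  norm_num

lemma appr_eq_val (n : ℕ) (x : ℤ_[2]) : x.appr n = (padMod n x).val := by
  rw [padMod, ZMod.val_natCast, Nat.mod_eq_of_lt (x.appr_lt n)]

lemma appr_mod (x : ℤ_[2]) {k n : ℕ} (h : k ≤ n) : x.appr n % 2^k = x.appr k := by
  have h0 : ZMod.castHom (pow_dvd_pow 2 h) (ZMod (2^k)) (PadicInt.toZModPow n x)
      = PadicInt.toZModPow k x := by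
    rw [← PadicInt.zmod_cast_comp_toZModPow k n h]; rfl
  have h2 : ((x.appr n : ℕ) : ZMod (2^k)) = ((x.appr k : ℕ) : ZMod (2^k)) := by
    rw [← padMod_eq_toZModPow k x, padMod, ← padMod_eq_toZModPow n x, padMod] at h0
    rw [← h0, map_natCast]
  rw [ZMod.natCast_eq_natCast_iff] at h2
  have h3 : x.appr k % 2^k = x.appr k := Nat.mod_eq_of_lt (x.appr_lt k)
  unfold Nat.ModEq at h2
  omega

lemma padMod_eq_iff_appr (n : ℕ) (x y : ℤ_[2]) :
    padMod n x = padMod n y ↔ x.appr n = y.appr n := by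
  constructor
  · intro h; rw [appr_eq_val, appr_eq_val, h]
  · intro h; rw [padMod, padMod, h]

lemma appr_div_lt (n : ℕ) (x : ℤ_[2]) : x.appr (n+1) / 2^n < 2 := by
  apply Nat.div_lt_iff_lt_mul (Nat.pow_pos (n := n) (by norm_num)) |>.2
  have := x.appr_lt (n+1); rw [pow_succ] at this; omega

lemma bit2_val (n : ℕ) (x : ℤ_[2]) : (bit2 n x).val = x.appr (n+1) / 2^n := by
  rw [bit2, ZMod.val_natCast, Nat.mod_eq_of_lt (appr_div_lt n x)]

lemma appr_succ (n : ℕ) (x : ℤ_[2]) :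
    x.appr (n+1) = x.appr n + 2^n * (bit2 n x).val := by
  rw [bit2_val, ← appr_mod x (Nat.le_succ n), Nat.mod_add_div]

lemma padMod_succ_eq_iff (n : ℕ) (x y : ℤ_[2]) :
    padMod (n+1) x = padMod (n+1) y ↔ padMod n x = padMod n y ∧ bit2 n x = bit2 n y := by
  rw [padMod_eq_iff_appr, padMod_eq_iff_appr]
  constructor
  · intro h
    have h1 : x.appr n = y.appr n := by
      rw [← appr_mod x (Nat.le_succ n), ← appr_mod y (Nat.le_succ n), h]
    have h2 : (bit2 n x).val = (bit2 n y).val := by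
      rw [bit2_val, bit2_val, h]
    exact ⟨h1, ZMod.val_injective _ h2⟩
  · rintro ⟨h1, h2⟩
    rw [appr_succ, appr_succ, h1, h2]

lemma padMod_eq_iff_bits (n : ℕ) (x y : ℤ_[2]) :
    padMod n x = padMod n y ↔ ∀ j < n, bit2 j x = bit2 j y := by
  induction n with
  | zero =>
    simp only [Nat.not_lt_zero, false_implies, iff_true, forall_const]
    rw [padMod_eq_iff_appr]; rfl
  | succ n ih =>
    rw [padMod_succ_eq_iff, ih]
    constructor
    · rintro ⟨h1, h2⟩ j hj
      rcases Nat.lt_succ_iff_lt_or_eq.1 hj with h | h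
      · exact h1 j h
      · subst h; exact h2
    · intro h
      exact ⟨fun j hj => h j (Nat.lt_succ_of_lt hj), h n (Nat.lt_succ_self n)⟩

lemma padMod_natCast (n k : ℕ) : padMod n ((k:ℕ):ℤ_[2]) = (k : ZMod (2^n)) := by
  rw [padMod_eq_toZModPow, map_natCast]

lemma appr_natCast (n k : ℕ) : ((k:ℕ):ℤ_[2]).appr n = k % 2^n := by
  rw [appr_eq_val, padMod_natCast, ZMod.val_natCast]

lemma bit2_natCast (j k : ℕ) : bit2 j ((k:ℕ):ℤ_[2]) = ((k / 2^j : ℕ) : ZMod 2) := by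
  rw [bit2, appr_natCast, pow_succ, Nat.mod_mul_right_div_self, ZMod.natCast_mod]

lemma padMod_lift (n : ℕ) (a : ZMod (2^n)) : padMod n ((a.val : ℤ_[2])) = a := by
  rw [padMod_natCast, ZMod.natCast_zmod_val]

lemma bit2_lift_high (n : ℕ) (a : ZMod (2^n)) : bit2 n ((a.val : ℤ_[2])) = 0 := by
  rw [bit2_natCast, Nat.div_eq_of_lt (a.val_lt), Nat.cast_zero]

lemma norm_two_pow (i : ℕ) : ‖(2:ℤ_[2])^i‖ = (2⁻¹:ℝ)^i := by
  induction i with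
  | zero => simp
  | succ i ih =>
    rw [pow_succ, norm_mul, ih, pow_succ]
    have h2 : ‖(2:ℤ_[2])‖ = (2:ℝ)⁻¹ := by
      have := @PadicInt.norm_p 2 _
      simpa using this
    rw [h2]

lemma summable_ofBits (b : ℕ → ZMod 2) : Summable (fun i : ℕ => ((b i).val : ℤ_[2]) * 2^i) := by
  apply NonarchimedeanAddGroup.summable_of_tendsto_cofinite_zero
  rw [Nat.cofinite_eq_atTop]
  apply squeeze_zero_norm (a := fun i => (2⁻¹ : ℝ)^i)
  · intro i
    calc ‖((b i).val : ℤ_[2]) * 2^i‖ ≤ 1 * ‖(2:ℤ_[2])^i‖ := by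
          rw [norm_mul]
          exact mul_le_mul_of_nonneg_right (PadicInt.norm_le_one _) (norm_nonneg _)
      _ = (2⁻¹:ℝ)^i := by rw [one_mul, norm_two_pow]
  · exact tendsto_pow_atTop_nhds_zero_of_lt_one (by norm_num) (by norm_num)

lemma sum_bits_lt (b : ℕ → ZMod 2) (n : ℕ) :
    (∑ i ∈ Finset.range n, (b i).val * 2^i) < 2^n := by
  induction n with
  | zero => simp
  | succ n ih =>
    rw [Finset.sum_range_succ, pow_succ]
    have h1 : (b n).val ≤ 1 := Nat.lt_succ_iff.mp (ZMod.val_lt _)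
    have h2 : (b n).val * 2^n ≤ 1 * 2^n := Nat.mul_le_mul_right _ h1
    omega

lemma padMod_ofBits (n : ℕ) (b : ℕ → ZMod 2) :
    padMod n (ofBits b) = ((∑ i ∈ Finset.range n, (b i).val * 2^i : ℕ) : ZMod (2^n)) := by
  have key : padMod n (ofBits b)
      = padMod n ((∑ i ∈ Finset.range n, (b i).val * 2^i : ℕ) : ℤ_[2]) := by
    rw [padMod_eq_iff_span]
    have hsum := summable_ofBits b
    have hsplit := Summable.sum_add_tsum_nat_add (f := fun i : ℕ => ((b i).val : ℤ_[2]) * 2^i) n hsum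
    have h1 : ofBits b - ((∑ i ∈ Finset.range n, (b i).val * 2^i : ℕ) : ℤ_[2])
        = ∑' i : ℕ, ((b (i + n)).val : ℤ_[2]) * 2^(i + n) := by
      rw [ofBits, ← hsplit]
      push_cast
      ring
    rw [h1]
    have step1 : ∑' i : ℕ, ((b (i + n)).val : ℤ_[2]) * 2^(i + n)
        = ∑' i : ℕ, (2:ℤ_[2])^n * (((b (i + n)).val : ℤ_[2]) * 2^i) := by
      congr 1
      funext i
      rw [pow_add]
      ring
    have step2 := (summable_ofBits (fun i => b (i + n))).tsum_mul_left ((2:ℤ_[2])^n)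
    rw [step1, step2, Ideal.mem_span_singleton]
    exact Dvd.intro _ rfl
  rw [key, padMod_eq_toZModPow, map_natCast]

lemma appr_ofBits (n : ℕ) (b : ℕ → ZMod 2) :
    (ofBits b).appr n = ∑ i ∈ Finset.range n, (b i).val * 2^i := by
  rw [appr_eq_val, padMod_ofBits, ZMod.val_natCast, Nat.mod_eq_of_lt (sum_bits_lt b n)]

lemma bit2_ofBits (j : ℕ) (b : ℕ → ZMod 2) : bit2 j (ofBits b) = b j := by
  rw [bit2, appr_ofBits, Finset.sum_range_succ]
  have h1 : (∑ i ∈ Finset.range j, (b i).val * 2^i) / 2^j = 0 :=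
    Nat.div_eq_of_lt (sum_bits_lt b j)
  rw [Nat.add_mul_div_right _ _ (Nat.pow_pos (n := j) (by norm_num)), h1, zero_add,
    ZMod.natCast_zmod_val]

lemma bit2_xor2 (j : ℕ) (x y : ℤ_[2]) : bit2 j (xor2 x y) = bit2 j x + bit2 j y := by
  rw [xor2, bit2_ofBits]

lemma bit2_and2 (j : ℕ) (x y : ℤ_[2]) : bit2 j (and2 x y) = bit2 j x * bit2 j y := by
  rw [and2, bit2_ofBits]

lemma bit2_neg_one (j : ℕ) : bit2 j (-1 : ℤ_[2]) = 1 := by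
  have hpos : (1:ℕ) ≤ 2^(j+1) := Nat.one_le_two_pow
  have hcast : (-1 : ZMod (2^(j+1))) = ((2^(j+1) - 1 : ℕ) : ZMod (2^(j+1))) := by
    rw [Nat.cast_sub hpos, ZMod.natCast_self, Nat.cast_one]
    ring
  have h1 : ((-1 : ℤ_[2]).appr (j+1)) = 2^(j+1) - 1 := by
    rw [appr_eq_val, padMod_eq_toZModPow, map_neg, map_one, hcast, ZMod.val_natCast,
      Nat.mod_eq_of_lt (by omega)]
  rw [bit2, h1]
  have h2 : (2^(j+1) - 1) / 2^j = 1 := by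
    have hj : (0:ℕ) < 2^j := Nat.pow_pos (n := j) (by norm_num)
    have hp : 2^(j+1) = 2^j * 2 := pow_succ 2 j
    apply Nat.div_eq_of_lt_le <;> omega
  rw [h2, Nat.cast_one]

lemma andL_cons (a : ℤ_[2]) (l : List ℤ_[2]) : andL (a :: l) = and2 a (andL l) := rfl

lemma bit2_andL (j : ℕ) (l : List ℤ_[2]) : bit2 j (andL l) = (l.map (bit2 j)).prod := by
  induction l with
  | nil => simpa [andL] using bit2_neg_one j
  | cons a l ih => rw [andL_cons, bit2_and2, ih, List.map_cons, List.prod_cons]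

end Aux

/-! ### Single-cycle infrastructure -/

section SC
variable {α : Type*} {g : α → α}

lemma IsSingleCycle.surjective (h : IsSingleCycle g) : Function.Surjective g := by
  intro b
  obtain ⟨k, hk⟩ := h (g b) b
  refine ⟨g^[k] b, ?_⟩
  calc g (g^[k] b) = g^[k+1] b := (Function.iterate_succ_apply' g k b).symm
    _ = g^[k] (g b) := Function.iterate_succ_apply g k b
    _ = b := hk

lemma IsSingleCycle.injective [Finite α] (h : IsSingleCycle g) : Function.Injective g :=
  Finite.injective_iff_surjective.2 h.surjective

lemma IsSingleCycle.of_semiconj {α β : Type*} {T : α → α} {T' : β → β} (φ : α → β)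
    (hinj : Function.Injective φ) (hc : ∀ a, φ (T a) = T' (φ a))
    (h : IsSingleCycle T') : IsSingleCycle T := by
  intro x y
  obtain ⟨k, hk⟩ := h (φ x) (φ y)
  refine ⟨k, hinj ?_⟩
  rw [← hk]
  exact (Function.Semiconj.iterate_right hc k x)

lemma IsSingleCycle.orbit [Fintype α] (h : IsSingleCycle g) (a : α) :
    g^[Fintype.card α] a = a ∧
      Function.Bijective (fun i : Fin (Fintype.card α) => g^[(i:ℕ)] a) := by
  classical
  have hinj := h.injective
  set N := Fintype.card α with hNdef
  have hrep : ∃ d, 0 < d ∧ g^[d] a = a := by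
    have hcard : Fintype.card α < Fintype.card (Fin (N+1)) := by simp [hNdef]
    obtain ⟨i, j, hne, hij⟩ := Fintype.exists_ne_map_eq_of_card_lt
      (fun i : Fin (N+1) => g^[(i:ℕ)] a) hcard
    rcases Ne.lt_or_gt hne with hlt | hlt
    · refine ⟨(j:ℕ) - (i:ℕ), by omega, ?_⟩
      have : g^[(i:ℕ) + ((j:ℕ) - (i:ℕ))] a = g^[(i:ℕ)] a := by
        rw [Nat.add_sub_cancel' (le_of_lt hlt)]
        exact hij.symm
      rw [Function.iterate_add_apply] at this
      exact hinj.iterate (i:ℕ) this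
    · refine ⟨(i:ℕ) - (j:ℕ), by omega, ?_⟩
      have : g^[(j:ℕ) + ((i:ℕ) - (j:ℕ))] a = g^[(j:ℕ)] a := by
        rw [Nat.add_sub_cancel' (le_of_lt hlt)]
        exact hij
      rw [Function.iterate_add_apply] at this
      exact hinj.iterate (j:ℕ) this
  have hspec := Nat.find_spec hrep
  set d := Nat.find hrep with hddef
  obtain ⟨hd0, hda⟩ := hspec
  have hdmin : ∀ e, 0 < e ∧ g^[e] a = a → d ≤ e := fun e he => Nat.find_le he
  have hmul : ∀ q, g^[d * q] a = a := by
    intro q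
    induction q with
    | zero => simp
    | succ q ih =>
      rw [Nat.mul_succ, Function.iterate_add_apply, hda]
      exact ih
  have hperiod : ∀ k, g^[k] a = g^[k % d] a := by
    intro k
    conv_lhs => rw [← Nat.div_add_mod k d]
    rw [Nat.add_comm, Function.iterate_add_apply, hmul]
  have hinj_below : ∀ i j, i < d → j < d → g^[i] a = g^[j] a → i = j := by
    intro i j hi hj hij
    by_contra hne
    wlog hlt : i < j generalizing i j
    · exact this j i hj hi hij.symm (Ne.symm hne) (by omega)
    have : g^[i + (j - i)] a = g^[i] a := by
      rw [Nat.add_sub_cancel' (le_of_lt hlt)]; exact hij.symm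
    rw [Function.iterate_add_apply] at this
    have h2 : g^[j-i] a = a := hinj.iterate i this
    have := hdmin (j - i) ⟨by omega, h2⟩
    omega
  have hsurj_below : ∀ b, ∃ i, i < d ∧ g^[i] a = b := by
    intro b
    obtain ⟨k, hk⟩ := h a b
    exact ⟨k % d, Nat.mod_lt _ hd0, by rw [← hperiod]; exact hk⟩
  have hdN : d = N := by
    have h1 : d ≤ N := by
      have : Function.Injective (fun i : Fin d => g^[(i:ℕ)] a) := by
        intro i j hij
        exact Fin.ext (hinj_below _ _ i.isLt j.isLt hij)
      simpa [hNdef] using Fintype.card_le_of_injective _ this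
    have h2 : N ≤ d := by
      have : Function.Surjective (fun i : Fin d => g^[(i:ℕ)] a) := by
        intro b
        obtain ⟨i, hi, hib⟩ := hsurj_below b
        exact ⟨⟨i, hi⟩, hib⟩
      simpa [hNdef] using Fintype.card_le_of_surjective _ this
    omega
  rw [← hdN]
  refine ⟨by simpa using hmul 1, ?_, ?_⟩
  · intro i j hij
    exact Fin.ext (hinj_below _ _ i.isLt j.isLt hij)
  · intro b
    obtain ⟨i, hi, hib⟩ := hsurj_below b
    exact ⟨⟨i, hi⟩, hib⟩

end SC

section KLemmas

lemma zmod2_resolve {u v : ZMod 2} (h : u ≠ v) : u + 1 = v := by revert h; revert u v; decide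

lemma zmod2_add_of_ne {a b : ZMod 2} (h : a ≠ b) : a + b = 1 := by revert h; revert a b; decide

lemma zmod2_sum_eq {a b c d : ZMod 2} (h1 : a ≠ b) (h2 : c ≠ d) : a + c = b + d := by
  revert h1 h2; revert a b c d; decide

lemma zmod2_cancel {B v C : ZMod 2} (h : B + v = C) : B = C + v := by
  revert h; revert B v C; decide

lemma lemmaK {α : Type*} [Fintype α] {g : α → α} (hg : IsSingleCycle g)
    (ρ : α → ZMod 2) (hρ : ∑ a : α, ρ a = 1) :
    IsSingleCycle (fun p : α × ZMod 2 => (g p.1, p.2 + ρ p.1)) := by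
  set T := fun p : α × ZMod 2 => (g p.1, p.2 + ρ p.1) with hT
  have hiter : ∀ (k : ℕ) (p : α × ZMod 2),
      T^[k] p = (g^[k] p.1, p.2 + ∑ i ∈ Finset.range k, ρ (g^[i] p.1)) := by
    intro k
    induction k with
    | zero => intro p; simp
    | succ k ih =>
      intro p
      rw [Function.iterate_succ_apply', ih p, hT]
      simp only [Prod.mk.injEq]
      constructor
      · exact (Function.iterate_succ_apply' g k p.1).symm
      · rw [Finset.sum_range_succ, add_assoc]
  set N := Fintype.card α with hN
  have hTN : ∀ p : α × ZMod 2, T^[N] p = (p.1, p.2 + 1) := by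
    intro p
    rw [hiter]
    obtain ⟨hfix, hbij⟩ := hg.orbit p.1
    have hsum : ∑ i ∈ Finset.range N, ρ (g^[i] p.1) = 1 := by
      rw [Finset.sum_range fun i => ρ (g^[i] p.1)]
      rw [← hρ]
      exact Fintype.sum_bijective _ hbij _ _ (fun i => rfl)
    rw [hfix, hsum]
  intro p q
  obtain ⟨k, hk⟩ := hg p.1 q.1
  set s := ∑ i ∈ Finset.range k, ρ (g^[i] p.1) with hs
  by_cases hcase : p.2 + s = q.2
  · refine ⟨k, ?_⟩
    rw [hiter k p, ← hs]
    exact Prod.ext hk hcase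
  · refine ⟨N + k, ?_⟩
    rw [Function.iterate_add_apply, hiter k p, ← hs, hTN]
    exact Prod.ext hk (zmod2_resolve hcase)

lemma filter_lt_castSucc {m : ℕ} (t : Fin m) :
    (Finset.univ.filter (fun s => s < Fin.castSucc t) : Finset (Fin (m+1)))
      = (Finset.univ.filter (fun s => s < t)).map Fin.castSuccEmb := by
  ext s'
  simp only [Finset.mem_filter, Finset.mem_univ, true_and, Finset.mem_map]
  constructor
  · intro hlt
    have hne : s' ≠ Fin.last m := by
      rw [Fin.lt_def] at hlt
      intro h
      rw [h] at hlt
      simp only [Fin.val_last, Fin.coe_castSucc] at hlt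
      omega
    refine ⟨(s'.castPred hne), ?_, ?_⟩
    · rw [Fin.lt_def] at hlt ⊢
      simp only [Fin.coe_castPred, Fin.coe_castSucc] at hlt ⊢
      exact hlt
    · show Fin.castSucc _ = s'
      exact Fin.castSucc_castPred s' hne
  · rintro ⟨s, hs, rfl⟩
    show Fin.castSucc s < Fin.castSucc t
    exact Fin.castSucc_lt_castSucc_iff.mpr hs

lemma filter_lt_last (m : ℕ) :
    (Finset.univ.filter (fun s => s < Fin.last m) : Finset (Fin (m+1)))
      = Finset.univ.map Fin.castSuccEmb := by
  ext s'
  simp only [Finset.mem_filter, Finset.mem_univ, true_and, Finset.mem_map]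
  constructor
  · intro hlt
    have hne : s' ≠ Fin.last m := Fin.ne_of_lt hlt
    refine ⟨s'.castPred hne, ?_⟩
    show Fin.castSucc _ = s'
    exact Fin.castSucc_castPred s' hne
  · rintro ⟨s, rfl⟩
    show Fin.castSucc s < Fin.last m
    exact Fin.castSucc_lt_last s

lemma sum_zmod2_shift (c : ZMod 2) : ∑ x : ZMod 2, (c + x) = 1 := by
  revert c; decide

lemma lemmaK' {α : Type*} [Fintype α] {g : α → α} (hg : IsSingleCycle g)
    {m : ℕ} (F : Fin m → α → ZMod 2) (c : Fin m → Fin m → α → ZMod 2)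
    (hF : ∀ t, ∑ a : α, F t a = 1) :
    IsSingleCycle (fun p : α × (Fin m → ZMod 2) =>
      (g p.1, fun t => p.2 t + F t p.1 *
        ∏ s ∈ Finset.univ.filter (fun s => s < t), (c t s p.1 + p.2 s))) := by
  induction m with
  | zero =>
    refine IsSingleCycle.of_semiconj Prod.fst ?_ (fun p => rfl) hg
    intro p q h
    exact Prod.ext h (Subsingleton.elim _ _)
  | succ m ih =>
    set B := α × (Fin m → ZMod 2)
    set G' := fun p : B =>
      (g p.1, fun t => p.2 t + F (Fin.castSucc t) p.1 *
        ∏ s ∈ Finset.univ.filter (fun s => s < t),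
          (c (Fin.castSucc t) (Fin.castSucc s) p.1 + p.2 s))
    have hG' : IsSingleCycle G' :=
      ih (fun t a => F (Fin.castSucc t) a) (fun t s a => c (Fin.castSucc t) (Fin.castSucc s) a)
        (fun t => hF (Fin.castSucc t))
    set ρ := fun p : B => F (Fin.last m) p.1 *
      ∏ s : Fin m, (c (Fin.last m) (Fin.castSucc s) p.1 + p.2 s) with hρdef
    have hρ : ∑ p : B, ρ p = 1 := by
      rw [Fintype.sum_prod_type]
      have hinner : ∀ a : α, ∑ w : Fin m → ZMod 2,
          ∏ s : Fin m, (c (Fin.last m) (Fin.castSucc s) a + w s) = 1 := by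
        intro a
        rw [← Fintype.piFinset_univ, ← Finset.prod_univ_sum]
        rw [Finset.prod_eq_one]
        intro s _
        exact sum_zmod2_shift _
      calc ∑ a : α, ∑ w : Fin m → ZMod 2, ρ (a, w)
          = ∑ a : α, F (Fin.last m) a * ∑ w : Fin m → ZMod 2,
              ∏ s : Fin m, (c (Fin.last m) (Fin.castSucc s) a + w s) := by
            congr 1; funext a; rw [Finset.mul_sum]
        _ = ∑ a : α, F (Fin.last m) a := by
            congr 1; funext a; rw [hinner a, mul_one]
        _ = 1 := hF _
    have hKK := lemmaK hG' ρ hρ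
    refine IsSingleCycle.of_semiconj
      (fun p : α × (Fin (m+1) → ZMod 2) =>
        (((p.1, fun s => p.2 (Fin.castSucc s)) : B), p.2 (Fin.last m)))
      ?_ ?_ hKK
    · intro p q h
      simp only [Prod.mk.injEq] at h
      obtain ⟨⟨h1, h2⟩, h3⟩ := h
      refine Prod.ext h1 ?_
      funext t
      induction t using Fin.lastCases with
      | last => exact h3
      | cast t => exact congrFun h2 t
    · intro p
      simp only [Prod.mk.injEq]
      refine ⟨Prod.ext rfl ?_, ?_⟩
      · funext t
        show p.2 (Fin.castSucc t) + F (Fin.castSucc t) p.1 * _ = _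
        congr 1
        congr 1
        rw [filter_lt_castSucc, Finset.prod_map]
        rfl
      · show p.2 (Fin.last m) + F (Fin.last m) p.1 * _ = p.2 (Fin.last m) + ρ _
        congr 1
        rw [hρdef]
        congr 1
        rw [filter_lt_last, Finset.prod_map]
        rfl

end KLemmas

/-! ### Univariate facts -/

section Univ
variable {f : ℤ_[2] → ℤ_[2]} {n : ℕ}

lemma compat_padMod (hf : Compatible f) (n : ℕ) {x y : ℤ_[2]}
    (h : padMod n x = padMod n y) : padMod n (f x) = padMod n (f y) := by
  rw [padMod_eq_iff_norm] at h ⊢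
  exact le_trans (hf x y) h

lemma inducedMap_padMod (hf : Compatible f) (n : ℕ) (x : ℤ_[2]) :
    inducedMap n f (padMod n x) = padMod n (f x) := by
  rw [inducedMap]
  exact compat_padMod hf n (padMod_lift n (padMod n x))

/-- projection -/
noncomputable def projZ (n : ℕ) (b : ZMod (2^(n+1))) : ZMod (2^n) := (b.val : ZMod (2^n))

lemma padMod_proj (n : ℕ) (b : ZMod (2^(n+1))) :
    padMod n ((b.val : ℤ_[2])) = projZ n b := by
  rw [padMod_natCast]; rfl

lemma projZ_padMod (n : ℕ) (x : ℤ_[2]) : projZ n (padMod (n+1) x) = padMod n x := by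
  rw [← padMod_proj]
  exact ((padMod_succ_eq_iff n _ x).mp (padMod_lift (n+1) (padMod (n+1) x))).1

lemma bit2_padLift (n : ℕ) (x : ℤ_[2]) :
    bit2 n (((padMod (n+1) x).val : ℤ_[2])) = bit2 n x :=
  ((padMod_succ_eq_iff n _ x).mp (padMod_lift (n+1) (padMod (n+1) x))).2

lemma elem_ext (n : ℕ) (b c : ZMod (2^(n+1))) (h1 : projZ n b = projZ n c)
    (h2 : bit2 n ((b.val : ℤ_[2])) = bit2 n ((c.val : ℤ_[2]))) : b = c := by
  rw [← padMod_lift (n+1) b, ← padMod_lift (n+1) c]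
  rw [padMod_succ_eq_iff]
  refine ⟨?_, h2⟩
  rw [padMod_proj, padMod_proj]
  exact h1

lemma mp_bit (hf : Compatible f) (hmp : Function.Bijective (inducedMap (n+1) f))
    {x y : ℤ_[2]} (h : padMod n x = padMod n y) :
    bit2 n (f x) + bit2 n x = bit2 n (f y) + bit2 n y := by
  by_cases hxy : padMod (n+1) x = padMod (n+1) y
  · have hfx := compat_padMod hf (n+1) hxy
    rw [((padMod_succ_eq_iff n _ _).mp hfx).2, ((padMod_succ_eq_iff n _ _).mp hxy).2]
  · have hfxy : padMod (n+1) (f x) ≠ padMod (n+1) (f y) := by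
      intro hcon
      apply hxy
      apply hmp.1
      rw [inducedMap_padMod hf, inducedMap_padMod hf]
      exact hcon
    have hb1 : bit2 n x ≠ bit2 n y := by
      intro hcon
      exact hxy ((padMod_succ_eq_iff n x y).mpr ⟨h, hcon⟩)
    have hb2 : bit2 n (f x) ≠ bit2 n (f y) := by
      intro hcon
      exact hfxy ((padMod_succ_eq_iff n _ _).mpr ⟨compat_padMod hf n h, hcon⟩)
    exact zmod2_sum_eq hb2 hb1

lemma ergodic_bijective {n : ℕ} (h : IsSingleCycle (inducedMap n f)) :
    Function.Bijective (inducedMap n f) :=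
  ⟨Finite.injective_iff_surjective.2 h.surjective, h.surjective⟩

lemma claimC (hf : Compatible f) (he : ∀ k : ℕ, IsSingleCycle (inducedMap k f)) (n : ℕ) :
    ∑ a : ZMod (2^n), bit2 n (f ((a.val : ℤ_[2]))) = 1 := by
  classical
  set G := inducedMap (n+1) f with hG
  set g' := inducedMap n f with hg'
  have hGsc : IsSingleCycle G := he (n+1)
  have hg'sc : IsSingleCycle g' := he n
  set N := Fintype.card (ZMod (2^n)) with hNdef
  have hNval : N = 2^n := by rw [hNdef, ZMod.card]
  have hMval : Fintype.card (ZMod (2^(n+1))) = 2^(n+1) := ZMod.card _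
  have hcomm : ∀ b : ZMod (2^(n+1)), projZ n (G b) = g' (projZ n b) := by
    intro b
    rw [hG, hg', inducedMap, projZ_padMod, ← padMod_proj, inducedMap_padMod hf]
  have hprojiter : ∀ i : ℕ, projZ n (G^[i] 0) = g'^[i] (projZ n 0) := by
    intro i
    induction i with
    | zero => rfl
    | succ i ih => rw [Function.iterate_succ_apply', Function.iterate_succ_apply', hcomm, ih]
  have hproj0 : projZ n (0 : ZMod (2^(n+1))) = 0 := by
    rw [projZ, ZMod.val_zero, Nat.cast_zero]
  obtain ⟨hGfix, hGbij⟩ := hGsc.orbit 0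
  obtain ⟨hg'fix, hg'bij⟩ := hg'sc.orbit 0
  have hNM : N < Fintype.card (ZMod (2^(n+1))) := by
    rw [hNval, hMval]; exact Nat.pow_lt_pow_succ (by norm_num)
  have hGN : G^[N] 0 ≠ 0 := by
    intro hcon
    have h0M : 0 < Fintype.card (ZMod (2^(n+1))) := by omega
    have := hGbij.1 (a₁ := ⟨N, hNM⟩) (a₂ := ⟨0, h0M⟩) (by simpa using hcon)
    have hN0 : N ≠ 0 := by rw [hNval]; positivity
    exact hN0 (by simpa using congrArg Fin.val this)
  set u : ℕ → ZMod 2 := fun i => bit2 n (((G^[i] 0).val : ℤ_[2])) with hu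
  have tele : ∀ k, ∑ i ∈ Finset.range k, (u (i+1) + u i) = u k + u 0 := by
    intro k
    induction k with
    | zero => simp [CharTwo.add_self_eq_zero]
    | succ k ih =>
      rw [Finset.sum_range_succ, ih]
      have h2 := CharTwo.add_self_eq_zero (u k)
      linear_combination h2
  have hstep : ∀ i : ℕ, u (i+1) + u i
      = bit2 n (f (((g'^[i] (0 : ZMod (2^n))).val : ℤ_[2]))) := by
    intro i
    have h1 : u (i+1) = bit2 n (f (((G^[i] 0).val : ℤ_[2]))) := by
      rw [hu]
      simp only []
      rw [Function.iterate_succ_apply', hG, inducedMap, bit2_padLift]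
    rw [h1]
    have h2 := mp_bit (n := n) hf (ergodic_bijective (he (n+1)))
      (x := (((G^[i] 0).val : ℤ_[2]))) (y := (((projZ n (G^[i] 0)).val : ℤ_[2]))) ?_
    · rw [hu]
      have h3 : bit2 n (((projZ n (G^[i] 0)).val : ℤ_[2])) = 0 := bit2_lift_high n _
      rw [h2, h3, add_zero]
      rw [hprojiter, hproj0]
    · rw [padMod_proj, padMod_lift]
  have hsum : ∑ i ∈ Finset.range N, (u (i+1) + u i)
      = ∑ a : ZMod (2^n), bit2 n (f ((a.val : ℤ_[2]))) := by
    rw [Finset.sum_congr rfl (fun i _ => hstep i)]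
    rw [Finset.sum_range (fun i => bit2 n (f (((g'^[i] (0:ZMod (2^n))).val : ℤ_[2]))))]
    exact Fintype.sum_bijective _ hg'bij _ _ (fun i => rfl)
  rw [← hsum, tele N]
  have hbitne : u N ≠ u 0 := by
    intro hcon
    apply hGN
    apply elem_ext n (G^[N] 0) 0
    · rw [hprojiter, hproj0, hNdef]; exact hg'fix
    · exact hcon
  exact zmod2_add_of_ne hbitne

end Univ

section ListProd

lemma list_if_prod {M : Type*} [CommMonoid M] {α : Type*} (p : α → Prop) [DecidablePred p]
    (h : α → M) (l : List α) :
    ((l.filter (fun s => p s)).map h).prod = (l.map (fun s => if p s then h s else 1)).prod := by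
  induction l with
  | nil => rfl
  | cons a l ih =>
    by_cases hp : p a
    · simp [List.filter_cons, hp, ih]
    · simp [List.filter_cons, hp, ih]

lemma listFinsetProd {M : Type*} [CommMonoid M] {m : ℕ} (p : Fin m → Prop) [DecidablePred p]
    (h : Fin m → M) :
    (((List.finRange m).filter (fun s => p s)).map h).prod = ∏ s ∈ Finset.univ.filter p, h s := by
  rw [Finset.prod_filter, Fin.prod_univ_def, list_if_prod]

end ListProd
section Main
variable {m : ℕ} (f g : Fin m → Fin m → ℤ_[2] → ℤ_[2])

lemma compatH
    (hfc : ∀ j s : Fin m, Compatible (f j s))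
    (hgc : ∀ j s : Fin m, s < j → Compatible (g j s)) :
    CompatibleM m (fun x t => xor2 (x t)
        (and2 (andL (((List.finRange m).filter (fun s => s < t)).map (fun s => g t s (x s))))
              (andL ((List.finRange m).map (fun r => xor2 (f t r (x r)) (x r)))))) := by
  intro n x y hxy t
  rw [padMod_eq_iff_bits]
  intro j hj
  have hx : ∀ i : Fin m, bit2 j (x i) = bit2 j (y i) :=
    fun i => (padMod_eq_iff_bits n _ _).mp (hxy i) j hj
  simp only [bit2_xor2, bit2_and2, bit2_andL, List.map_map, Function.comp_def]
  rw [hx t]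
  congr 1
  congr 1
  · apply congrArg List.prod
    apply List.map_congr_left
    intro s hs
    rw [List.mem_filter] at hs
    have hst : s < t := of_decide_eq_true hs.2
    exact (padMod_eq_iff_bits n _ _).mp (compat_padMod (hgc t s hst) n (hxy s)) j hj
  · apply congrArg List.prod
    apply List.map_congr_left
    intro r _
    rw [(padMod_eq_iff_bits n _ _).mp (compat_padMod (hfc t r) n (hxy r)) j hj, hx r]

lemma ergH
    (hf : ∀ j s : Fin m, Compatible (f j s) ∧ ErgodicZ (f j s))
    (hg : ∀ j s : Fin m, s < j → Compatible (g j s) ∧ MeasurePreservingZ (g j s))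
    (hcompat : CompatibleM m (fun x t => xor2 (x t)
        (and2 (andL (((List.finRange m).filter (fun s => s < t)).map (fun s => g t s (x s))))
              (andL ((List.finRange m).map (fun r => xor2 (f t r (x r)) (x r))))))) :
    ErgodicM m (fun x t => xor2 (x t)
        (and2 (andL (((List.finRange m).filter (fun s => s < t)).map (fun s => g t s (x s))))
              (andL ((List.finRange m).map (fun r => xor2 (f t r (x r)) (x r)))))) := by
  intro n
  induction n with
  | zero =>
    intro a b
    refine ⟨0, ?_⟩
    funext i
    haveI : Subsingleton (ZMod (2^0)) := by rw [pow_zero]; infer_instance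
    exact Subsingleton.elim _ _
  | succ n ih =>
    classical
    set F : Fin m → (Fin m → ZMod (2^n)) → ZMod 2 :=
      fun t a => ∏ r : Fin m, bit2 n (f t r (((a r).val : ℤ_[2]))) with hFdef
    set c : Fin m → Fin m → (Fin m → ZMod (2^n)) → ZMod 2 :=
      fun t s a => bit2 n (g t s (((a s).val : ℤ_[2]))) with hcdef
    have hF : ∀ t, ∑ a : Fin m → ZMod (2^n), F t a = 1 := by
      intro t
      have hswap := Finset.prod_univ_sum (κ := fun _ : Fin m => ZMod (2^n))
        (fun _ : Fin m => (Finset.univ : Finset (ZMod (2^n))))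
        (fun r b => bit2 n (f t r ((b.val : ℤ_[2]))))
      rw [Fintype.piFinset_univ] at hswap
      have h1 : ∑ a : Fin m → ZMod (2^n), F t a
          = ∏ r : Fin m, ∑ b : ZMod (2^n), bit2 n (f t r ((b.val : ℤ_[2]))) := by
        rw [hswap, hFdef]
      rw [h1]
      rw [Finset.prod_congr rfl (fun r _ => claimC (hf t r).1 (hf t r).2 n)]
      exact Finset.prod_const_one
    have hT := lemmaK' ih F c hF
    refine IsSingleCycle.of_semiconj
      (fun xx : Fin m → ZMod (2^(n+1)) =>
        ((fun i => projZ n (xx i)), fun i => bit2 n (((xx i).val : ℤ_[2])))) ?_ ?_ hT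
    · intro x y h
      simp only [Prod.mk.injEq] at h
      funext i
      exact elem_ext n (x i) (y i) (congrFun h.1 i) (congrFun h.2 i)
    · intro x
      have hpad : ∀ i : Fin m, padMod n ((((x i).val : ℕ) : ℤ_[2]))
          = padMod n ((((projZ n (x i)).val : ℕ) : ℤ_[2])) := by
        intro i
        rw [padMod_proj, padMod_lift]
      dsimp only
      refine Prod.ext ?_ ?_
      · funext i
        simp only [inducedMapM]
        rw [projZ_padMod]
        exact hcompat n _ _ hpad i
      · funext t
        simp only [inducedMapM]
        rw [bit2_padLift]
        simp only [bit2_xor2, bit2_and2, bit2_andL, List.map_map, Function.comp_def]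
        have hL2 : ((List.finRange m).map
              (fun r => bit2 n (f t r ((((x r).val : ℕ) : ℤ_[2])))
                + bit2 n ((((x r).val : ℕ) : ℤ_[2])))).prod
            = F t (fun i => projZ n (x i)) := by
          have hent : ∀ r ∈ List.finRange m,
              bit2 n (f t r ((((x r).val : ℕ) : ℤ_[2]))) + bit2 n ((((x r).val : ℕ) : ℤ_[2]))
              = bit2 n (f t r ((((projZ n (x r)).val : ℕ) : ℤ_[2]))) := by
            intro r _
            have hmp := mp_bit (n := n) (hf t r).1 (ergodic_bijective ((hf t r).2 (n+1))) (hpad r)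
            rw [hmp, bit2_lift_high, add_zero]
          rw [List.map_congr_left hent, hFdef, ← Fin.prod_univ_def]
        have hL1 : (((List.finRange m).filter (fun s => s < t)).map
              (fun s => bit2 n (g t s ((((x s).val : ℕ) : ℤ_[2]))))).prod
            = ∏ s ∈ Finset.univ.filter (fun s => s < t),
                (c t s (fun i => projZ n (x i)) + bit2 n ((((x s).val : ℕ) : ℤ_[2]))) := by
          have hent : ∀ s ∈ (List.finRange m).filter (fun s => s < t),
              bit2 n (g t s ((((x s).val : ℕ) : ℤ_[2])))
              = c t s (fun i => projZ n (x i)) + bit2 n ((((x s).val : ℕ) : ℤ_[2])) := by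
            intro s hs
            rw [List.mem_filter] at hs
            have hst : s < t := of_decide_eq_true hs.2
            have hmp := mp_bit (n := n) (hg t s hst).1 ((hg t s hst).2 (n+1)) (hpad s)
            rw [bit2_lift_high, add_zero] at hmp
            rw [hcdef]
            exact zmod2_cancel hmp
          rw [List.map_congr_left hent, listFinsetProd]
        rw [hL1, hL2, mul_comm]
end Main

/-- the `m`-variate map with coordinates
`h^t(x) = x^t ⊕ ((⋀_{s<t} g^t_s(x^s)) ∧ (⋀_{r<m} (f^t_r(x^r) ⊕ x^r)))`,
built from compatible ergodic `f^t_r` and compatible measure-preserving `g^t_s`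
(`s < t`), is compatible and ergodic: for every `n` it induces a single-cycle
permutation of `(ZMod 2^n)^m` (of length `2^{mn}`). -/
theorem multivariate_ergodic_construction (m : ℕ) (hm : 0 < m)
    (f g : Fin m → Fin m → ℤ_[2] → ℤ_[2])
    (hf : ∀ j s : Fin m, Compatible (f j s) ∧ ErgodicZ (f j s))
    (hg : ∀ j s : Fin m, s < j → Compatible (g j s) ∧ MeasurePreservingZ (g j s)) :
    CompatibleM m (fun x t => xor2 (x t)
        (and2 (andL (((List.finRange m).filter (fun s => s < t)).map (fun s => g t s (x s))))
              (andL ((List.finRange m).map (fun r => xor2 (f t r (x r)) (x r)))))) ∧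
    ErgodicM m (fun x t => xor2 (x t)
        (and2 (andL (((List.finRange m).filter (fun s => s < t)).map (fun s => g t s (x s))))
              (andL ((List.finRange m).map (fun r => xor2 (f t r (x r)) (x r)))))) := by
  have h1 := compatH f g (fun j s => (hf j s).1) (fun j s hs => (hg j s hs).1)
  exact ⟨h1, ergH f g hf hg h1⟩
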